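/- Let (A,[.,.,.]) be a finite-dimensional 3-Lie algebra with basis e1,...,en and dual basis e1*,...,en* of A*, and let T : A → A be a linear map. Then T is an O-operator with respect to the adjoint representation if and only if r := Σ_i (e_i* ⊗ T(e_i) − T(e_i) ⊗ e_i*) is a skew-symmetric solution of the 3-Lie classical Yang-Baxter equation in the semidirect product 3-Lie algebra A ⋉_{ad*} A*. -/
import Mathlib

open Finset

/-- The standard basis of `ℂⁿ`. -/
def e {n : ℕ} (i : Fin n) : Fin n → ℂ := fun j => if j = i then 1 else 0

/-- Index set of the semidirect product `A ⋉_{ad*} A*`: `inl` indexes the basis of `A`,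
`inr` indexes the dual basis of `A*`. -/
abbrev idx (n : ℕ) := Fin n ⊕ Fin n

/-- Structure constants of the semidirect product `A ⋉_{ad*} A*`, where `C` are the
structure constants of `A`: `[eᵢ,eⱼ,eₖ] = Σ C i j k t • eₜ` and the coadjoint action
satisfies `⟨ad*(x,y)α, z⟩ = −⟨α,[x,y,z]⟩`. -/
def D {n : ℕ} (C : Fin n → Fin n → Fin n → Fin n → ℂ) :
    idx n → idx n → idx n → idx n → ℂ
  | .inl i, .inl j, .inl k, .inl t => C i j k t
  | .inl i, .inl j, .inr k, .inr t => -C i j t k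
  | .inl i, .inr j, .inl k, .inr t => -C k i t j
  | .inr i, .inl j, .inl k, .inr t => -C j k t i
  | _, _, _, _ => 0

/-- Coordinates of the tensor `r = Σᵢ (eᵢ* ⊗ T eᵢ − T eᵢ ⊗ eᵢ*)` in `g ⊗ g`,
`g = A ⋉_{ad*} A*`. -/
def R {n : ℕ} (T : (Fin n → ℂ) →ₗ[ℂ] (Fin n → ℂ)) : idx n → idx n → ℂ
  | .inr i, .inl j => T (e i) j
  | .inl j, .inr i => -(T (e i) j)
  | _, _ => 0

section Aux

variable {n : ℕ}

lemma e_sum (x : Fin n → ℂ) : ∑ a, x a • e a = x := by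
  funext j; simp [e, Finset.sum_apply, Finset.sum_ite_eq]

lemma sum_cyc {M : Type*} [AddCommMonoid M] (g : Fin n → Fin n → Fin n → M) :
    ∑ i, ∑ j, ∑ k, g i j k = ∑ k, ∑ i, ∑ j, g i j k :=
  (Finset.sum_congr rfl fun _ _ => Finset.sum_comm).trans Finset.sum_comm

lemma sum_cyc' {M : Type*} [AddCommMonoid M] (g : Fin n → Fin n → Fin n → M) :
    ∑ i, ∑ j, ∑ k, g i j k = ∑ j, ∑ k, ∑ i, g i j k :=
  Finset.sum_comm.trans (Finset.sum_congr rfl fun _ _ => Finset.sum_comm)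

lemma sum_rot {M : Type*} [AddCommMonoid M] (g : Fin n → Fin n → Fin n → M) :
    ∑ i, ∑ j, ∑ k, g i j k = ∑ k, ∑ j, ∑ i, g i j k := by
  calc ∑ i, ∑ j, ∑ k, g i j k
      = ∑ i, ∑ k, ∑ j, g i j k := Finset.sum_congr rfl fun _ _ => Finset.sum_comm
    _ = ∑ k, ∑ i, ∑ j, g i j k := Finset.sum_comm
    _ = ∑ k, ∑ j, ∑ i, g i j k := Finset.sum_congr rfl fun _ _ => Finset.sum_comm

/-- swap the roles of the two indices in a double sum -/
lemma swapC (u v : Fin n → ℂ) (d : Fin n → Fin n → ℂ) :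
    ∑ i, ∑ j, u i * v j * d j i = ∑ i, ∑ j, v i * u j * d i j := by
  rw [Finset.sum_comm]
  exact Finset.sum_congr rfl fun i _ => Finset.sum_congr rfl fun j _ => by ring

/-- pull out the third index of a triple sum -/
lemma pull_s3 (u v w : Fin n → ℂ) (cc : Fin n → Fin n → Fin n → ℂ) :
    ∑ i, ∑ j, ∑ s, u i * v j * w s * cc i j s
      = ∑ s, (∑ i, ∑ j, u i * v j * cc i j s) * w s := by
  rw [sum_cyc (fun i j s => u i * v j * w s * cc i j s)]
  refine Finset.sum_congr rfl fun s _ => ?_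
  rw [Finset.sum_mul]
  refine Finset.sum_congr rfl fun i _ => ?_
  rw [Finset.sum_mul]
  exact Finset.sum_congr rfl fun j _ => by ring

/-- pull out the second index of a triple sum -/
lemma pull_s2 (u v w : Fin n → ℂ) (cc : Fin n → Fin n → Fin n → ℂ) :
    ∑ i, ∑ s, ∑ j, u i * w s * v j * cc i j s
      = ∑ s, (∑ i, ∑ j, u i * v j * cc i j s) * w s := by
  rw [Finset.sum_comm]
  refine Finset.sum_congr rfl fun s _ => ?_
  rw [Finset.sum_mul]
  refine Finset.sum_congr rfl fun i _ => ?_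
  rw [Finset.sum_mul]
  exact Finset.sum_congr rfl fun j _ => by ring

/-- pull out the first index of a triple sum -/
lemma pull_s1 (u v w : Fin n → ℂ) (cc : Fin n → Fin n → Fin n → ℂ) :
    ∑ s, ∑ i, ∑ j, w s * u i * v j * cc i j s
      = ∑ s, (∑ i, ∑ j, u i * v j * cc i j s) * w s := by
  refine Finset.sum_congr rfl fun s _ => ?_
  rw [Finset.sum_mul]
  refine Finset.sum_congr rfl fun i _ => ?_
  rw [Finset.sum_mul]
  exact Finset.sum_congr rfl fun j _ => by ring

variable (f : (Fin n → ℂ) →ₗ[ℂ] (Fin n → ℂ) →ₗ[ℂ] (Fin n → ℂ) →ₗ[ℂ] (Fin n → ℂ))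
  (C : Fin n → Fin n → Fin n → Fin n → ℂ)
  (T : (Fin n → ℂ) →ₗ[ℂ] (Fin n → ℂ))

lemma apply3 (hC : ∀ i j k, f (e i) (e j) (e k) = ∑ t, C i j k t • e t)
    (u v w : Fin n → ℂ) (t : Fin n) :
    f u v w t = ∑ i, ∑ j, ∑ k, u i * v j * w k * C i j k t := by
  conv_lhs => rw [← e_sum u, ← e_sum v, ← e_sum w]
  simp only [map_sum, map_smul, LinearMap.coe_sum, Finset.sum_apply,
    LinearMap.smul_apply, Pi.smul_apply, smul_eq_mul, hC, e, mul_ite, mul_one, mul_zero,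
    Finset.sum_ite_eq, Finset.mem_univ, if_true]
  rw [sum_rot (fun i j k => u i * v j * w k * C i j k t)]
  refine Finset.sum_congr rfl fun k _ => ?_
  rw [Finset.mul_sum]
  refine Finset.sum_congr rfl fun j _ => ?_
  rw [Finset.mul_sum, Finset.mul_sum]
  exact Finset.sum_congr rfl fun i _ => by ring

lemma Tapply (x : Fin n → ℂ) (t : Fin n) : T x t = ∑ s, x s * T (e s) t := by
  conv_lhs => rw [← e_sum x]
  simp [Finset.sum_apply]

/-- the coordinate form of the O-operator identity -/
def OP (a b c t : Fin n) : Prop :=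
  (∑ i, ∑ j, ∑ k, T (e a) i * T (e b) j * T (e c) k * C i j k t)
  = (∑ s, (∑ i, ∑ j, T (e a) i * T (e b) j * C i j c s) * T (e s) t)
  + (∑ s, (∑ i, ∑ j, T (e b) i * T (e c) j * C i j a s) * T (e s) t)
  + (∑ s, (∑ i, ∑ j, T (e c) i * T (e a) j * C i j b s) * T (e s) t)

lemma C_skew1 (hC : ∀ i j k, f (e i) (e j) (e k) = ∑ t, C i j k t • e t)
    (hskew1 : ∀ x y z, f x y z = - f y x z) (i j k t : Fin n) :
    C i j k t = -C j i k t := by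
  have key : ∀ i' j' : Fin n, C i' j' k t = f (e i') (e j') (e k) t := by
    intro i' j'
    rw [hC]
    simp [e, Finset.sum_apply, mul_ite, Finset.sum_ite_eq]
  rw [key, key, hskew1 (e i)]
  simp

lemma tri_expand (S1 S2 S3 : (Fin n → ℂ) →ₗ[ℂ] (Fin n → ℂ)) (x y z : Fin n → ℂ) :
    f (S1 x) (S2 y) (S3 z) =
      ∑ a, ∑ b, ∑ c, (x a * y b * z c) • f (S1 (e a)) (S2 (e b)) (S3 (e c)) := by
  conv_lhs => rw [← e_sum x, ← e_sum y, ← e_sum z]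
  simp only [map_sum, map_smul, LinearMap.coe_sum, Finset.sum_apply,
    LinearMap.smul_apply, Finset.smul_sum, smul_smul]
  rw [sum_cyc]
  refine Finset.sum_congr rfl fun a _ => ?_
  rw [Finset.sum_comm]
  refine Finset.sum_congr rfl fun b _ => Finset.sum_congr rfl fun c _ => ?_
  ring_nf

lemma oop_iff_basis :
    (∀ x y z, f (T x) (T y) (T z) =
        T (f (T x) (T y) z + f (T y) (T z) x + f (T z) (T x) y)) ↔
    (∀ a b c, f (T (e a)) (T (e b)) (T (e c)) =
        T (f (T (e a)) (T (e b)) (e c) + f (T (e b)) (T (e c)) (e a)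
          + f (T (e c)) (T (e a)) (e b))) := by
  constructor
  · intro h a b c
    simpa using h (e a) (e b) (e c)
  · intro h x y z
    have E1 := tri_expand f T T T x y z
    have E2 : f (T x) (T y) z =
        ∑ a, ∑ b, ∑ c, (x a * y b * z c) • f (T (e a)) (T (e b)) (e c) := by
      simpa using tri_expand f T T LinearMap.id x y z
    have E3 : f (T y) (T z) x =
        ∑ a, ∑ b, ∑ c, (x a * y b * z c) • f (T (e b)) (T (e c)) (e a) := by
      have h0 : f (T y) (T z) x =
          ∑ a, ∑ b, ∑ c, (y a * z b * x c) • f (T (e a)) (T (e b)) (e c) := by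
        simpa using tri_expand f T T LinearMap.id y z x
      rw [h0, sum_cyc (fun a b c => (y a * z b * x c) • f (T (e a)) (T (e b)) (e c))]
      exact Finset.sum_congr rfl fun a _ => Finset.sum_congr rfl fun b _ =>
        Finset.sum_congr rfl fun c _ => by
          rw [show y b * z c * x a = x a * y b * z c by ring]
    have E4 : f (T z) (T x) y =
        ∑ a, ∑ b, ∑ c, (x a * y b * z c) • f (T (e c)) (T (e a)) (e b) := by
      have h0 : f (T z) (T x) y =
          ∑ a, ∑ b, ∑ c, (z a * x b * y c) • f (T (e a)) (T (e b)) (e c) := by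
        simpa using tri_expand f T T LinearMap.id z x y
      rw [h0, sum_cyc' (fun a b c => (z a * x b * y c) • f (T (e a)) (T (e b)) (e c))]
      exact Finset.sum_congr rfl fun a _ => Finset.sum_congr rfl fun b _ =>
        Finset.sum_congr rfl fun c _ => by
          rw [show z c * x a * y b = x a * y b * z c by ring]
    rw [E1, E2, E3, E4]
    simp only [← Finset.sum_add_distrib, map_sum, map_smul, ← smul_add, ← map_add]
    exact Finset.sum_congr rfl fun a _ => Finset.sum_congr rfl fun b _ =>
      Finset.sum_congr rfl fun c _ => by rw [h a b c]

lemma oop_basis (hC : ∀ i j k, f (e i) (e j) (e k) = ∑ t, C i j k t • e t)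
    (a b c : Fin n) :
    (f (T (e a)) (T (e b)) (T (e c)) =
      T (f (T (e a)) (T (e b)) (e c) + f (T (e b)) (T (e c)) (e a)
        + f (T (e c)) (T (e a)) (e b))) ↔ ∀ t, OP C T a b c t := by
  rw [funext_iff]
  refine forall_congr' fun t => ?_
  rw [apply3 f C hC, Tapply T, OP]
  have hw : ∀ s, (f (T (e a)) (T (e b)) (e c) + f (T (e b)) (T (e c)) (e a)
      + f (T (e c)) (T (e a)) (e b)) s
      = (∑ i, ∑ j, T (e a) i * T (e b) j * C i j c s)
      + (∑ i, ∑ j, T (e b) i * T (e c) j * C i j a s)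
      + (∑ i, ∑ j, T (e c) i * T (e a) j * C i j b s) := by
    intro s
    simp only [Pi.add_apply, apply3 f C hC, e, mul_ite, mul_one, mul_zero, ite_mul, zero_mul,
      Finset.sum_ite_eq', Finset.mem_univ, if_true]
  refine Eq.congr rfl ?_
  calc ∑ s, (f (T (e a)) (T (e b)) (e c) + f (T (e b)) (T (e c)) (e a)
          + f (T (e c)) (T (e a)) (e b)) s * T (e s) t
      = ∑ s, ((∑ i, ∑ j, T (e a) i * T (e b) j * C i j c s) * T (e s) t
          + (∑ i, ∑ j, T (e b) i * T (e c) j * C i j a s) * T (e s) t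
          + (∑ i, ∑ j, T (e c) i * T (e a) j * C i j b s) * T (e s) t) := by
        refine Finset.sum_congr rfl fun s _ => ?_
        rw [hw s]; ring
    _ = _ := by rw [Finset.sum_add_distrib, Finset.sum_add_distrib]

lemma anti2 (hC1 : ∀ i j k t, C i j k t = -C j i k t) (u v : Fin n → ℂ) (b' s : Fin n) :
    ∑ i, ∑ j, u i * v j * C j i b' s = -∑ i, ∑ j, u i * v j * C i j b' s := by
  have h : ∀ i j : Fin n, u i * v j * C j i b' s = -(u i * v j * C i j b' s) := fun i j => by
    rw [hC1 i j b' s]; ring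
  simp only [h, Finset.sum_neg_distrib]

lemma swap_anti (hC1 : ∀ i j k t, C i j k t = -C j i k t) (u v : Fin n → ℂ) (b' s : Fin n) :
    ∑ i, ∑ j, u i * v j * C i j b' s = -∑ i, ∑ j, v i * u j * C i j b' s := by
  rw [← swapC v u (fun i j => C i j b' s)]
  exact anti2 C hC1 v u b' s

lemma neg_out (g w : Fin n → ℂ) :
    ∑ s, -(g s) * w s = -∑ s, g s * w s := by
  simp [neg_mul, Finset.sum_neg_distrib]

end Aux

set_option maxHeartbeats 2000000

/-- `T` is an `𝒪`-operator with respect to the adjoint representation iff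
`r = Σᵢ (eᵢ* ⊗ T eᵢ − T eᵢ ⊗ eᵢ*)` is a skew-symmetric solution of the 3-Lie classical
Yang–Baxter equation in the semidirect product `A ⋉_{ad*} A*`, expressed in coordinates. -/
theorem o_operator_iff_CYBE_solution (n : ℕ)
    (f : (Fin n → ℂ) →ₗ[ℂ] (Fin n → ℂ) →ₗ[ℂ] (Fin n → ℂ) →ₗ[ℂ] (Fin n → ℂ))
    (hskew1 : ∀ x y z, f x y z = - f y x z)
    (hskew2 : ∀ x y z, f x y z = - f x z y)
    (hFI : ∀ x1 x2 x3 x4 x5, f x1 x2 (f x3 x4 x5) =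
      f (f x1 x2 x3) x4 x5 + f x3 (f x1 x2 x4) x5 + f x3 x4 (f x1 x2 x5))
    (C : Fin n → Fin n → Fin n → Fin n → ℂ)
    (hC : ∀ i j k, f (e i) (e j) (e k) = ∑ t, C i j k t • e t)
    (T : (Fin n → ℂ) →ₗ[ℂ] (Fin n → ℂ)) :
    (∀ x y z, f (T x) (T y) (T z) =
        T (f (T x) (T y) z + f (T y) (T z) x + f (T z) (T x) y)) ↔
    ((∀ p q : idx n, R T p q = - R T q p) ∧
     (∀ α β γ δ : idx n,
        (∑ i : idx n, ∑ j : idx n, ∑ k : idx n,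
          R T i β * R T j γ * R T k δ * D C i j k α)
        + (∑ i : idx n, ∑ j : idx n, ∑ k : idx n,
          R T α i * R T j γ * R T k δ * D C i j k β)
        + (∑ i : idx n, ∑ j : idx n, ∑ k : idx n,
          R T α i * R T β j * R T k δ * D C i j k γ)
        + (∑ i : idx n, ∑ j : idx n, ∑ k : idx n,
          R T α i * R T β j * R T γ k * D C i j k δ) = 0)) := by
  have hC1 : ∀ i j k t, C i j k t = -C j i k t := C_skew1 f C hC hskew1
  have hmain : (∀ x y z, f (T x) (T y) (T z) =
      T (f (T x) (T y) z + f (T y) (T z) x + f (T z) (T x) y)) ↔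
      ∀ a b c t, OP C T a b c t := by
    rw [oop_iff_basis f T]
    constructor
    · intro h a b c t; exact ((oop_basis f C T hC a b c).mp (h a b c)) t
    · intro h a b c; exact (oop_basis f C T hC a b c).mpr (h a b c)
  constructor
  · intro h
    have hOP := hmain.mp h
    refine ⟨by rintro (p|p) (q|q) <;> simp [R], ?_⟩
    rintro (x1|x1) (x2|x2) (x3|x3) (x4|x4) <;>
      simp only [Fintype.sum_sum_type, R, D] <;>
      simp only [zero_mul, mul_zero, neg_mul, mul_neg, neg_neg, neg_zero, add_zero, zero_add,
        Finset.sum_const_zero, Finset.sum_neg_distrib]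
    · -- case D : α = inl
      have hD2 : (∑ x : Fin n, ∑ x_1 : Fin n, ∑ x_2 : Fin n,
            T (e x) x1 * T (e x3) x_1 * T (e x4) x_2 * C x_1 x_2 x2 x)
          = ∑ s, (∑ i, ∑ j, T (e x3) i * T (e x4) j * C i j x2 s) * T (e s) x1 :=
        pull_s1 _ _ _ _
      have hD3 : (∑ x : Fin n, ∑ x_1 : Fin n, ∑ x_2 : Fin n,
            T (e x) x1 * T (e x2) x_1 * T (e x4) x_2 * C x_1 x_2 x3 x)
          = -∑ s, (∑ i, ∑ j, T (e x4) i * T (e x2) j * C i j x3 s) * T (e s) x1 := by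
        rw [pull_s1 (fun i => T (e x2) i) (fun j => T (e x4) j) (fun s => T (e s) x1)
          (fun i j s => C i j x3 s)]
        calc ∑ s, (∑ i, ∑ j, T (e x2) i * T (e x4) j * C i j x3 s) * T (e s) x1
            = ∑ s, -(∑ i, ∑ j, T (e x4) i * T (e x2) j * C i j x3 s) * T (e s) x1 :=
              Finset.sum_congr rfl fun s _ => by
                rw [swap_anti C hC1 (fun i => T (e x2) i) (fun j => T (e x4) j) x3 s]
          _ = _ := neg_out _ _
      have hD4 : (∑ x : Fin n, ∑ x_1 : Fin n, ∑ x_2 : Fin n,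
            T (e x) x1 * T (e x2) x_1 * T (e x3) x_2 * C x_1 x_2 x4 x)
          = ∑ s, (∑ i, ∑ j, T (e x2) i * T (e x3) j * C i j x4 s) * T (e s) x1 :=
        pull_s1 _ _ _ _
      have hop := hOP x2 x3 x4 x1
      unfold OP at hop
      linear_combination -hop + hD2 - hD3 + hD4
    · -- case C : β = inl
      have hC1t : (∑ x : Fin n, ∑ x_1 : Fin n, ∑ x_2 : Fin n,
            T (e x) x2 * T (e x3) x_1 * T (e x4) x_2 * C x_1 x_2 x1 x)
          = ∑ s, (∑ i, ∑ j, T (e x3) i * T (e x4) j * C i j x1 s) * T (e s) x2 :=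
        pull_s1 _ _ _ _
      have hC3t : (∑ x : Fin n, ∑ x_1 : Fin n, ∑ x_2 : Fin n,
            T (e x1) x * T (e x_1) x2 * T (e x4) x_2 * C x_2 x x3 x_1)
          = ∑ s, (∑ i, ∑ j, T (e x4) i * T (e x1) j * C i j x3 s) * T (e s) x2 := by
        rw [pull_s2 (fun i => T (e x1) i) (fun j => T (e x4) j) (fun s => T (e s) x2)
          (fun i j s => C j i x3 s)]
        refine Finset.sum_congr rfl fun s _ => ?_
        rw [swapC (fun i => T (e x1) i) (fun j => T (e x4) j) (fun i j => C i j x3 s)]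
      have hC4t : (∑ x : Fin n, ∑ x_1 : Fin n, ∑ x_2 : Fin n,
            T (e x1) x * T (e x_1) x2 * T (e x3) x_2 * C x_2 x x4 x_1)
          = -∑ s, (∑ i, ∑ j, T (e x1) i * T (e x3) j * C i j x4 s) * T (e s) x2 := by
        rw [pull_s2 (fun i => T (e x1) i) (fun j => T (e x3) j) (fun s => T (e s) x2)
          (fun i j s => C j i x4 s)]
        calc ∑ s, (∑ i, ∑ j, T (e x1) i * T (e x3) j * C j i x4 s) * T (e s) x2
            = ∑ s, -(∑ i, ∑ j, T (e x1) i * T (e x3) j * C i j x4 s) * T (e s) x2 :=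
              Finset.sum_congr rfl fun s _ => by
                rw [anti2 C hC1 (fun i => T (e x1) i) (fun j => T (e x3) j) x4 s]
          _ = _ := neg_out _ _
      have hop := hOP x1 x3 x4 x2
      unfold OP at hop
      linear_combination hop - hC1t - hC3t + hC4t
    · -- case B : γ = inl
      have hB1 : (∑ x : Fin n, ∑ x_1 : Fin n, ∑ x_2 : Fin n,
            T (e x2) x * T (e x_1) x3 * T (e x4) x_2 * C x_2 x x1 x_1)
          = -∑ s, (∑ i, ∑ j, T (e x2) i * T (e x4) j * C i j x1 s) * T (e s) x3 := by
        rw [pull_s2 (fun i => T (e x2) i) (fun j => T (e x4) j) (fun s => T (e s) x3)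
          (fun i j s => C j i x1 s)]
        calc ∑ s, (∑ i, ∑ j, T (e x2) i * T (e x4) j * C j i x1 s) * T (e s) x3
            = ∑ s, -(∑ i, ∑ j, T (e x2) i * T (e x4) j * C i j x1 s) * T (e s) x3 :=
              Finset.sum_congr rfl fun s _ => by
                rw [anti2 C hC1 (fun i => T (e x2) i) (fun j => T (e x4) j) x1 s]
          _ = _ := neg_out _ _
      have hB2 : (∑ x : Fin n, ∑ x_1 : Fin n, ∑ x_2 : Fin n,
            T (e x1) x * T (e x_1) x3 * T (e x4) x_2 * C x_2 x x2 x_1)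
          = ∑ s, (∑ i, ∑ j, T (e x4) i * T (e x1) j * C i j x2 s) * T (e s) x3 := by
        rw [pull_s2 (fun i => T (e x1) i) (fun j => T (e x4) j) (fun s => T (e s) x3)
          (fun i j s => C j i x2 s)]
        refine Finset.sum_congr rfl fun s _ => ?_
        rw [swapC (fun i => T (e x1) i) (fun j => T (e x4) j) (fun i j => C i j x2 s)]
      have hB4 : (∑ x : Fin n, ∑ x_1 : Fin n, ∑ x_2 : Fin n,
            T (e x1) x * T (e x2) x_1 * T (e x_2) x3 * C x x_1 x4 x_2)
          = ∑ s, (∑ i, ∑ j, T (e x1) i * T (e x2) j * C i j x4 s) * T (e s) x3 :=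
        pull_s3 _ _ _ _
      have hop := hOP x1 x2 x4 x3
      unfold OP at hop
      linear_combination -hop - hB1 + hB2 + hB4
    · -- case A : δ = inl
      have hA1 : (∑ x : Fin n, ∑ x_1 : Fin n, ∑ x_2 : Fin n,
            T (e x2) x * T (e x3) x_1 * T (e x_2) x4 * C x x_1 x1 x_2)
          = ∑ s, (∑ i, ∑ j, T (e x2) i * T (e x3) j * C i j x1 s) * T (e s) x4 :=
        pull_s3 _ _ _ _
      have hA2 : (∑ x : Fin n, ∑ x_1 : Fin n, ∑ x_2 : Fin n,
            T (e x1) x * T (e x3) x_1 * T (e x_2) x4 * C x x_1 x2 x_2)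
          = -∑ s, (∑ i, ∑ j, T (e x3) i * T (e x1) j * C i j x2 s) * T (e s) x4 := by
        rw [pull_s3 (fun i => T (e x1) i) (fun j => T (e x3) j) (fun s => T (e s) x4)
          (fun i j s => C i j x2 s)]
        calc ∑ s, (∑ i, ∑ j, T (e x1) i * T (e x3) j * C i j x2 s) * T (e s) x4
            = ∑ s, -(∑ i, ∑ j, T (e x3) i * T (e x1) j * C i j x2 s) * T (e s) x4 :=
              Finset.sum_congr rfl fun s _ => by
                rw [swap_anti C hC1 (fun i => T (e x1) i) (fun j => T (e x3) j) x2 s]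
          _ = _ := neg_out _ _
      have hA3 : (∑ x : Fin n, ∑ x_1 : Fin n, ∑ x_2 : Fin n,
            T (e x1) x * T (e x2) x_1 * T (e x_2) x4 * C x x_1 x3 x_2)
          = ∑ s, (∑ i, ∑ j, T (e x1) i * T (e x2) j * C i j x3 s) * T (e s) x4 :=
        pull_s3 _ _ _ _
      have hop := hOP x1 x2 x3 x4
      unfold OP at hop
      linear_combination hop - hA1 + hA2 - hA3
  · rintro ⟨-, h2⟩
    refine hmain.mpr fun a b c t => ?_
    have key := h2 (.inr a) (.inr b) (.inr c) (.inl t)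
    simp only [Fintype.sum_sum_type, R, D] at key
    simp only [zero_mul, mul_zero, neg_mul, mul_neg, neg_neg, neg_zero, add_zero, zero_add,
      Finset.sum_const_zero, Finset.sum_neg_distrib] at key
    unfold OP
    have k1 : (∑ x : Fin n, ∑ x_1 : Fin n, ∑ x_2 : Fin n,
          T (e b) x * T (e c) x_1 * T (e x_2) t * C x x_1 a x_2)
        = ∑ s, (∑ i, ∑ j, T (e b) i * T (e c) j * C i j a s) * T (e s) t :=
      pull_s3 _ _ _ _
    have k2 : (∑ x : Fin n, ∑ x_1 : Fin n, ∑ x_2 : Fin n,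
          T (e a) x * T (e c) x_1 * T (e x_2) t * C x x_1 b x_2)
        = -∑ s, (∑ i, ∑ j, T (e c) i * T (e a) j * C i j b s) * T (e s) t := by
      rw [pull_s3 (fun i => T (e a) i) (fun j => T (e c) j) (fun s => T (e s) t)
        (fun i j s => C i j b s)]
      calc ∑ s, (∑ i, ∑ j, T (e a) i * T (e c) j * C i j b s) * T (e s) t
          = ∑ s, -(∑ i, ∑ j, T (e c) i * T (e a) j * C i j b s) * T (e s) t :=
            Finset.sum_congr rfl fun s _ => by
              rw [swap_anti C hC1 (fun i => T (e a) i) (fun j => T (e c) j) b s]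
        _ = _ := neg_out _ _
    have k3 : (∑ x : Fin n, ∑ x_1 : Fin n, ∑ x_2 : Fin n,
          T (e a) x * T (e b) x_1 * T (e x_2) t * C x x_1 c x_2)
        = ∑ s, (∑ i, ∑ j, T (e a) i * T (e b) j * C i j c s) * T (e s) t :=
      pull_s3 _ _ _ _
    linear_combination key + k1 - k2 + k3
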